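/- Let H ≤ G1 × G2 × G3 be an almost-direct product, N1 = {π1 : (π1,1,1) ∈ H} and similarly N2, N3, and let [H] denote the image of H in (G1/N1) × (G2/N2) × (G3/N3). Then [H] is a strict almost-direct product of G1/N1, G2/N2, G3/N3: for each coordinate, any pair of elements of the other two quotient groups extends to a triple in [H] with a unique element in the remaining coordinate, and [H] is a proper subgroup of the full product of quotients. -/
import Mathlib


/-- The image `[H]` of an almost-direct product `H ≤ G1 × G2 × G3` in the
product of quotients `(G1/N1) × (G2/N2) × (G3/N3)` is a *strict* almost-direct
product: it is a proper subgroup, and each pair of coordinates extends uniquely. -/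
theorem quotient_is_strict_almost_direct_product
    {G1 G2 G3 : Type*} [Group G1] [Group G2] [Group G3]
    [Finite G1] [Finite G2] [Finite G3]
    (H : Subgroup (G1 × G2 × G3))
    (hne : H ≠ ⊤)
    (h1 : ∀ (b : G2) (c : G3), ∃ a : G1, ((a, b, c) : G1 × G2 × G3) ∈ H)
    (h2 : ∀ (a : G1) (c : G3), ∃ b : G2, ((a, b, c) : G1 × G2 × G3) ∈ H)
    (h3 : ∀ (a : G1) (b : G2), ∃ c : G3, ((a, b, c) : G1 × G2 × G3) ∈ H)
    (N1 : Subgroup G1) (N2 : Subgroup G2) (N3 : Subgroup G3)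
    [N1.Normal] [N2.Normal] [N3.Normal]
    (hN1 : ∀ x : G1, x ∈ N1 ↔ ((x, 1, 1) : G1 × G2 × G3) ∈ H)
    (hN2 : ∀ y : G2, y ∈ N2 ↔ ((1, y, 1) : G1 × G2 × G3) ∈ H)
    (hN3 : ∀ z : G3, z ∈ N3 ↔ ((1, 1, z) : G1 × G2 × G3) ∈ H) :
    let φ : (G1 × G2 × G3) →* (G1 ⧸ N1) × (G2 ⧸ N2) × (G3 ⧸ N3) :=
      (QuotientGroup.mk' N1).prodMap
        ((QuotientGroup.mk' N2).prodMap (QuotientGroup.mk' N3))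
    let K : Subgroup ((G1 ⧸ N1) × (G2 ⧸ N2) × (G3 ⧸ N3)) := H.map φ
    K ≠ ⊤ ∧
      (∀ (b : G2 ⧸ N2) (c : G3 ⧸ N3), ∃! a : G1 ⧸ N1, (a, b, c) ∈ K) ∧
      (∀ (a : G1 ⧸ N1) (c : G3 ⧸ N3), ∃! b : G2 ⧸ N2, (a, b, c) ∈ K) ∧
      (∀ (a : G1 ⧸ N1) (b : G2 ⧸ N2), ∃! c : G3 ⧸ N3, (a, b, c) ∈ K) := by
  intro φ K
  -- H absorbs coordinate changes within N1, N2, N3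
  have key : ∀ x x' : G1, ∀ y y' : G2, ∀ z z' : G3,
      (x, y, z) ∈ H → x⁻¹ * x' ∈ N1 → y⁻¹ * y' ∈ N2 → z⁻¹ * z' ∈ N3 →
      (x', y', z') ∈ H := by
    intro x x' y y' z z' hm n1 n2 n3
    have e1 : ((x⁻¹ * x', 1, 1) : G1 × G2 × G3) ∈ H := (hN1 _).mp n1
    have e2 : ((1, y⁻¹ * y', 1) : G1 × G2 × G3) ∈ H := (hN2 _).mp n2
    have e3 : ((1, 1, z⁻¹ * z') : G1 × G2 × G3) ∈ H := (hN3 _).mp n3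
    have := H.mul_mem (H.mul_mem (H.mul_mem hm e1) e2) e3
    simpa [Prod.ext_iff, mul_assoc] using this
  refine ⟨?_, ?_, ?_, ?_⟩
  · intro hK
    apply hne
    rw [Subgroup.eq_top_iff']
    rintro ⟨x, y, z⟩
    have hmem : ((↑x, ↑y, ↑z) : (G1 ⧸ N1) × (G2 ⧸ N2) × (G3 ⧸ N3)) ∈ K :=
      hK ▸ Subgroup.mem_top _
    obtain ⟨⟨x', y', z'⟩, hm, heq⟩ := hmem
    rw [Prod.ext_iff, Prod.ext_iff] at heq
    obtain ⟨e1, e2, e3⟩ := heq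
    exact key x' x y' y z' z hm (QuotientGroup.eq.mp e1) (QuotientGroup.eq.mp e2)
      (QuotientGroup.eq.mp e3)
  · intro b c
    obtain ⟨y, rfl⟩ := QuotientGroup.mk'_surjective N2 b
    obtain ⟨z, rfl⟩ := QuotientGroup.mk'_surjective N3 c
    obtain ⟨x, hx⟩ := h1 y z
    refine ⟨↑x, ⟨(x, y, z), hx, rfl⟩, ?_⟩
    rintro a ⟨⟨x', y', z'⟩, hm, heq⟩
    rw [Prod.ext_iff, Prod.ext_iff] at heq
    obtain ⟨e1, e2, e3⟩ := heq
    replace e1 : (↑x' : G1 ⧸ N1) = a := e1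
    replace e2 : (↑y' : G2 ⧸ N2) = ↑y := e2
    replace e3 : (↑z' : G3 ⧸ N3) = ↑z := e3
    have hm' : (x', y, z) ∈ H :=
      key x' x' y' y z' z hm (by simpa using N1.one_mem) (QuotientGroup.eq.mp e2) (QuotientGroup.eq.mp e3)
    have : ((x'⁻¹ * x, 1, 1) : G1 × G2 × G3) ∈ H := by
      simpa [Prod.ext_iff] using H.mul_mem (H.inv_mem hm') hx
    rw [← e1]
    exact QuotientGroup.eq.mpr ((hN1 _).mpr this)
  · intro a c
    obtain ⟨x, rfl⟩ := QuotientGroup.mk'_surjective N1 a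
    obtain ⟨z, rfl⟩ := QuotientGroup.mk'_surjective N3 c
    obtain ⟨y, hy⟩ := h2 x z
    refine ⟨↑y, ⟨(x, y, z), hy, rfl⟩, ?_⟩
    rintro b ⟨⟨x', y', z'⟩, hm, heq⟩
    rw [Prod.ext_iff, Prod.ext_iff] at heq
    obtain ⟨e1, e2, e3⟩ := heq
    replace e1 : (↑x' : G1 ⧸ N1) = ↑x := e1
    replace e2 : (↑y' : G2 ⧸ N2) = b := e2
    replace e3 : (↑z' : G3 ⧸ N3) = ↑z := e3
    have hm' : (x, y', z) ∈ H :=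
      key x' x y' y' z' z hm (QuotientGroup.eq.mp e1) (by simpa using N2.one_mem) (QuotientGroup.eq.mp e3)
    have : ((1, y'⁻¹ * y, 1) : G1 × G2 × G3) ∈ H := by
      simpa [Prod.ext_iff] using H.mul_mem (H.inv_mem hm') hy
    rw [← e2]
    exact QuotientGroup.eq.mpr ((hN2 _).mpr this)
  · intro a b
    obtain ⟨x, rfl⟩ := QuotientGroup.mk'_surjective N1 a
    obtain ⟨y, rfl⟩ := QuotientGroup.mk'_surjective N2 b
    obtain ⟨z, hz⟩ := h3 x y
    refine ⟨↑z, ⟨(x, y, z), hz, rfl⟩, ?_⟩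
    rintro c ⟨⟨x', y', z'⟩, hm, heq⟩
    rw [Prod.ext_iff, Prod.ext_iff] at heq
    obtain ⟨e1, e2, e3⟩ := heq
    replace e1 : (↑x' : G1 ⧸ N1) = ↑x := e1
    replace e2 : (↑y' : G2 ⧸ N2) = ↑y := e2
    replace e3 : (↑z' : G3 ⧸ N3) = c := e3
    have hm' : (x, y, z') ∈ H :=
      key x' x y' y z' z' hm (QuotientGroup.eq.mp e1) (QuotientGroup.eq.mp e2) (by simpa using N3.one_mem)
    have : ((1, 1, z'⁻¹ * z) : G1 × G2 × G3) ∈ H := by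
      simpa [Prod.ext_iff] using H.mul_mem (H.inv_mem hm') hz
    rw [← e3]
    exact QuotientGroup.eq.mpr ((hN3 _).mpr this)
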